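/- Let P be a mirror poset and let U be a partially complete closed subset of P (downward closed and containing at most one element of each dual pair). Then there exists a complete closed subset S of P with U ⊆ S. -/

import Mathlib

/-- Every partially complete closed subset `U` of a mirror poset (downward closed
and containing at most one element of each dual pair) extends to a complete
closed subset `S` with `U ⊆ S`. -/
theorem stmt19 {α : Type*} [PartialOrder α] [Finite α] (bar : α → α)
    (hinv : ∀ a, bar (bar a) = a)
    (hne : ∀ a, bar a ≠ a)
    (hincomp : ∀ a : α, ¬ a ≤ bar a ∧ ¬ bar a ≤ a)
    (hmirror : ∀ a b : α, a ≤ b ↔ bar b ≤ bar a)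
    (U : Set α)
    (hUclosed : IsLowerSet U)
    (hUpartial : ∀ a ∈ U, bar a ∉ U) :
    ∃ S : Set α, IsLowerSet S ∧ (∀ a, a ∈ S ↔ bar a ∉ S) ∧ U ⊆ S := by
  classical
  set C : Set (Set α) := {T | IsLowerSet T ∧ (∀ a ∈ T, bar a ∉ T) ∧ U ⊆ T} with hC
  have hCne : C.Nonempty := ⟨U, hUclosed, hUpartial, subset_rfl⟩
  obtain ⟨T, hTC, hTmax⟩ :=
    Set.Finite.exists_maximalFor id C (Set.toFinite C) hCne
  obtain ⟨hTlower, hTpart, hUT⟩ := hTC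
  have hcomplete : ∀ a, a ∈ T ∨ bar a ∈ T := by
    by_contra h
    push_neg at h
    obtain ⟨a0, ha0, hba0⟩ := h
    set D : Set α := {a | a ∉ T ∧ bar a ∉ T} with hD
    obtain ⟨a, haD, hamin⟩ :=
      Set.Finite.exists_minimalFor id D (Set.toFinite D) ⟨a0, ha0, hba0⟩
    -- key: if x ≤ a then bar x ∉ T
    have key : ∀ x, x ≤ a → bar x ∉ T := by
      intro x hx hbx
      exact haD.2 (hTlower ((hmirror x a).mp hx) hbx)
    -- key2: not both x ≤ a and bar x ≤ a
    have key2 : ∀ x, x ≤ a → bar x ≤ a → False := by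
      intro x hx hbx
      by_cases hxa : x = a
      · exact (hincomp a).2 (hxa ▸ hbx)
      · have hxnD : x ∉ D := fun hxD => hxa (le_antisymm hx (hamin hxD hx))
        have : x ∈ T ∨ bar x ∈ T := by
          by_contra hc; push_neg at hc; exact hxnD ⟨hc.1, hc.2⟩
        rcases this with hxT | hbxT
        · exact key (bar x) hbx (by rwa [hinv])
        · exact key x hx hbxT
    set T' : Set α := T ∪ {x | x ≤ a} with hT'
    have hT'C : T' ∈ C := by
      refine ⟨hTlower.union (fun b c hcb hb => le_trans hcb hb), ?_, fun u hu => Or.inl (hUT hu)⟩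
      intro b hb hbarb
      rcases hb with hbT | hba
      · rcases hbarb with hbT' | hba'
        · exact hTpart b hbT hbT'
        · exact key (bar b) hba' (show bar (bar b) ∈ T by rw [hinv]; exact hbT)
      · rcases hbarb with hbT' | hba'
        · exact key b hba hbT'
        · exact key2 b hba hba'
    have hsub : T ⊆ T' := Set.subset_union_left
    have := hTmax hT'C hsub
    have haT' : a ∈ T' := Or.inr (le_refl a)
    have hTT : T = T' := Set.Subset.antisymm hsub this
    rw [← hTT] at haT'
    exact haD.1 haT'
  refine ⟨T, hTlower, fun a => ⟨fun h => hTpart a h, fun h => ?_⟩, hUT⟩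
  rcases hcomplete a with h' | h'
  · exact h'
  · exact absurd h' h
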